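/- Fix m ≥ 1, a horizon N with N ≡ 1 (mod m), an n×n real matrix A, n×p real matrices B₁,…,B_m, a symmetric n×n matrix q, a symmetric p×p matrix r, p×n feedback matrices K₁,…,K_m, and terminal cost functions F₁,…,F_m : ℝⁿ → ℝ. Suppose the terminal-cost condition holds: for every σ ∈ {1,…,m} and every x ∈ ℝⁿ, F_{σ⁺}((A − B_{σ⁺}K_{σ⁺})x) + xᵀ q x + (K_{σ⁺}x)ᵀ r (K_{σ⁺}x) ≤ F_σ(x), where σ⁺ = (σ mod m) + 1. Fix k ∈ ℕ, an initial state x₀ ∈ ℝⁿ and inputs u₀,…,u_{N−1} ∈ ℝᵖ, and define states by x_{i+1} = A x_i + B_{σ(k+i)} u_i and the cost J_k(x₀, u) = F_{σ(k)}(x_N) + Σ_{i=0}^{N−1} (x_iᵀ q x_i + u_iᵀ r u_i). Define the shifted candidate inputs û_i = u_{i+1} for 0 ≤ i ≤ N−2 and û_{N−1} = −K_{σ(k+1)} x_N, with candidate states starting from x₁ and following x̂_{i+1} = A x̂_i + B_{σ(k+1+i)} û_i. Then x̂_i = x_{i+1} for 0 ≤ i ≤ N−1, σ(k+N) = σ(k+1),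 and J_{k+1}(x₁, û) ≤ J_k(x₀, u) − x₀ᵀ q x₀ − u₀ᵀ r u₀. -/

import Mathlib

open Matrix Finset

/-- Candidate-solution cost decrease for multiplexed MPC.  `σ k = (k % m) + 1` is the
m-periodic channel index.  If the terminal costs satisfy the decrease condition
`F_{σ⁺}((A − B_{σ⁺}K_{σ⁺})x) + xᵀqx + (K_{σ⁺}x)ᵀr(K_{σ⁺}x) ≤ F_σ(x)` for channels
`σ ∈ {1,…,m}`, `N ≡ 1 (mod m)`, and the candidate plan is the one-step shift of the
time-`k` plan with the terminal feedback move appended, then the candidate states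
coincide with the shifted states, `σ(k+N) = σ(k+1)`, and the candidate cost is at most
the time-`k` cost minus the first stage cost. -/
theorem stmt_1 {n p : ℕ} (m : ℕ) (hm : 1 ≤ m) (N : ℕ) (hN : 1 ≤ N)
    (hNm : N % m = 1 % m)
    (A : Matrix (Fin n) (Fin n) ℝ)
    (B : ℕ → Matrix (Fin n) (Fin p) ℝ)
    (q : Matrix (Fin n) (Fin n) ℝ) (hq : q.IsSymm)
    (r : Matrix (Fin p) (Fin p) ℝ) (hr : r.IsSymm)
    (K : ℕ → Matrix (Fin p) (Fin n) ℝ)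
    (F : ℕ → (Fin n → ℝ) → ℝ)
    (σ : ℕ → ℕ) (hσ : ∀ k, σ k = k % m + 1)
    (hterm : ∀ s, 1 ≤ s → s ≤ m → ∀ x : Fin n → ℝ,
      F (s % m + 1) ((A - B (s % m + 1) * K (s % m + 1)).mulVec x)
          + x ⬝ᵥ (q.mulVec x)
          + ((K (s % m + 1)).mulVec x) ⬝ᵥ (r.mulVec ((K (s % m + 1)).mulVec x))
        ≤ F s x)
    (k : ℕ)
    (x : ℕ → Fin n → ℝ) (u : ℕ → Fin p → ℝ)
    (hdyn : ∀ i < N, x (i + 1) = A.mulVec (x i) + (B (σ (k + i))).mulVec (u i))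
    (uh : ℕ → Fin p → ℝ) (xh : ℕ → Fin n → ℝ)
    (huh1 : ∀ i, i + 2 ≤ N → uh i = u (i + 1))
    (huh2 : uh (N - 1) = -((K (σ (k + 1))).mulVec (x N)))
    (hxh0 : xh 0 = x 1)
    (hxhdyn : ∀ i < N, xh (i + 1) = A.mulVec (xh i) + (B (σ (k + 1 + i))).mulVec (uh i)) :
    (∀ i, i + 1 ≤ N → xh i = x (i + 1)) ∧ σ (k + N) = σ (k + 1) ∧
      F (σ (k + 1)) (xh N)
          + ∑ i ∈ Finset.range N,
              ((xh i) ⬝ᵥ (q.mulVec (xh i)) + (uh i) ⬝ᵥ (r.mulVec (uh i)))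
        ≤ F (σ k) (x N)
            + ∑ i ∈ Finset.range N,
                ((x i) ⬝ᵥ (q.mulVec (x i)) + (u i) ⬝ᵥ (r.mulVec (u i)))
            - (x 0) ⬝ᵥ (q.mulVec (x 0)) - (u 0) ⬝ᵥ (r.mulVec (u 0)) := by

  have hstates : ∀ i, i + 1 ≤ N → xh i = x (i + 1) := by
    intro i
    induction i with
    | zero => intro _; exact hxh0
    | succ j ih =>
      intro hle
      have hj : j + 1 ≤ N := by omega
      have hk : k + 1 + j = k + (j + 1) := by ring
      rw [hxhdyn j (by omega), ih hj, huh1 j hle, hk, ← hdyn (j + 1) (by omega)]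
  have hσeq : σ (k + N) = σ (k + 1) := by
    rw [hσ, hσ, Nat.add_mod, hNm, ← Nat.add_mod]
  refine ⟨hstates, hσeq, ?_⟩
  obtain ⟨M, rfl⟩ : ∃ M, N = M + 1 := ⟨N - 1, by omega⟩
  set s' := σ (k + 1) with hs'
  -- terminal state of the candidate
  have hskm : σ k % m + 1 = s' := by
    rw [hσ, hs', hσ]
    congr 1
    exact Nat.ModEq.add_right 1 (Nat.mod_modEq k m)
  have hxhM : xh M = x (M + 1) := hstates M le_rfl
  have huhM : uh M = -((K s').mulVec (x (M + 1))) := by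
    simpa using huh2
  have hxhN : xh (M + 1) = (A - B s' * K s').mulVec (x (M + 1)) := by
    rw [hxhdyn M (by omega), hxhM, huhM]
    have hσM : σ (k + 1 + M) = s' := by
      have : k + 1 + M = k + (M + 1) := by ring
      rw [this, hσeq]
    rw [hσM, Matrix.sub_mulVec, Matrix.mulVec_neg, ← Matrix.mulVec_mulVec, sub_eq_add_neg]
  -- terminal cost decrease
  have hsk1 : 1 ≤ σ k := by rw [hσ]; omega
  have hskm' : σ k ≤ m := by rw [hσ]; have := Nat.mod_lt k hm; omega
  have hterm' := hterm (σ k) hsk1 hskm' (x (M + 1))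
  rw [hskm] at hterm'
  -- sums
  have hsum1 : ∑ i ∈ Finset.range (M + 1),
      ((x i) ⬝ᵥ (q.mulVec (x i)) + (u i) ⬝ᵥ (r.mulVec (u i)))
      = (∑ i ∈ Finset.range M,
          ((x (i+1)) ⬝ᵥ (q.mulVec (x (i+1))) + (u (i+1)) ⬝ᵥ (r.mulVec (u (i+1)))))
        + ((x 0) ⬝ᵥ (q.mulVec (x 0)) + (u 0) ⬝ᵥ (r.mulVec (u 0))) :=
    Finset.sum_range_succ' _ M
  have hsum2 : ∑ i ∈ Finset.range (M + 1),
      ((xh i) ⬝ᵥ (q.mulVec (xh i)) + (uh i) ⬝ᵥ (r.mulVec (uh i)))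
      = (∑ i ∈ Finset.range M,
          ((x (i+1)) ⬝ᵥ (q.mulVec (x (i+1))) + (u (i+1)) ⬝ᵥ (r.mulVec (u (i+1)))))
        + ((x (M+1)) ⬝ᵥ (q.mulVec (x (M+1)))
            + ((K s').mulVec (x (M+1))) ⬝ᵥ (r.mulVec ((K s').mulVec (x (M+1))))) := by
    rw [Finset.sum_range_succ]
    congr 1
    · apply Finset.sum_congr rfl
      intro i hi
      have hi' : i < M := Finset.mem_range.mp hi
      rw [hstates i (by omega), huh1 i (by omega)]
    · rw [hxhM, huhM, Matrix.mulVec_neg, dotProduct_neg, neg_dotProduct,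
        neg_neg]
  rw [hsum1, hsum2, hxhN]
  have h := hterm'
  linarith
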